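/- Let ℓ₁ < ℓ₂ be natural numbers with ℓ₁ ≥ 1, set S = {ℓ₁, …, ℓ₂} and d = ℓ₂ − ℓ₁, let a > 0, φ ∈ [0,1], and let κ, κ' be reals with κ > ℓ₂ and κ' > ℓ₂. For each ℓ ∈ S let φ_ℓ ∈ [0, φ] and K(ℓ) > 0, and define for τ ∈ {κ, κ'}: g_τ(ℓ) = ℓ/(1 − e^{−a(τ−ℓ)}) + 1/(1 − e^{−a}), F_τ(ℓ) = K(ℓ)·e^{−a·φ_ℓ·g_τ(ℓ)}, p*(ℓ) = (1/F_κ(ℓ))/(∑_{ℓ'∈S} 1/F_κ(ℓ')), and q_τ(ℓ) = p*(ℓ)F_τ(ℓ)/(∑_{ℓ'∈S} p*(ℓ')F_τ(ℓ')). Let ρ̄ = min{1, (1/d)·∑_{ℓ∈S}(e^{a·φ·Δ(ℓ)} − 1)} with Δ(ℓ) = ℓ·|1/(1 − e^{−a(κ'−ℓ)}) − 1/(1 − e^{−a(κ−ℓ)})|. Then the Shannon entropy of q_{κ'} satisfies H(q_{κ'}) ≥ (1−ρ̄)·log(d+1) + ρ̄·log ρ̄ − ρ̄ (with the convention ρ̄·log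 ρ̄ = 0 when ρ̄ = 0). -/

import Mathlib

open Finset




/-- Monotonicity of `ψ(t) = (1-t) log n + t log t - t` (decreasing on `[0,1]`). -/
lemma psi_mono (n ε ρ : ℝ) (hn : 1 ≤ n) (hε : 0 ≤ ε) (hερ : ε ≤ ρ) (hρ : ρ ≤ 1) :
    (1 - ρ) * Real.log n + ρ * Real.log ρ - ρ ≤ (1 - ε) * Real.log n + ε * Real.log ε - ε := by
  have hlogn : 0 ≤ Real.log n := Real.log_nonneg hn
  have hρ0 : 0 ≤ ρ := le_trans hε hερ
  rcases eq_or_lt_of_le hε with h0 | h0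
  · -- ε = 0
    rw [← h0]
    have h1 : ρ * Real.log ρ ≤ 0 :=
      mul_nonpos_of_nonneg_of_nonpos hρ0 (Real.log_nonpos hρ0 hρ)
    have h2 : 0 ≤ ρ * Real.log n := mul_nonneg hρ0 hlogn
    simp only [Real.log_zero, mul_zero]
    nlinarith
  · have hρpos : 0 < ρ := lt_of_lt_of_le h0 hερ
    have hlogρ : Real.log ρ ≤ 0 := Real.log_nonpos hρ0 hρ
    have key : Real.log (ρ / ε) ≤ ρ / ε - 1 :=
      Real.log_le_sub_one_of_pos (by positivity)
    rw [Real.log_div (ne_of_gt hρpos) (ne_of_gt h0)] at key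
    have h2 : ε * (Real.log ρ - Real.log ε) ≤ ρ - ε := by
      have := mul_le_mul_of_nonneg_left key hε
      have hεne : ε ≠ 0 := ne_of_gt h0
      calc ε * (Real.log ρ - Real.log ε) ≤ ε * (ρ / ε - 1) := this
        _ = ρ - ε := by field_simp
    have h3 : 0 ≤ (ρ - ε) * Real.log n := mul_nonneg (by linarith) hlogn
    have h4 : (ρ - ε) * Real.log ρ ≤ 0 :=
      mul_nonpos_of_nonneg_of_nonpos (by linarith) hlogρ
    nlinarith




/-- Entropy lower bound in terms of the one-sided deviation from uniform. -/
lemma entropy_lb {ι : Type*} [DecidableEq ι] (S : Finset ι) (q : ι → ℝ) (n ε : ℝ)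
    (hn : n = S.card) (hn1 : 1 ≤ n)
    (hq0 : ∀ i ∈ S, 0 ≤ q i) (hq1 : ∑ i ∈ S, q i = 1)
    (hε : ε = ∑ i ∈ S, max (q i - 1 / n) 0) :
    (1 - ε) * Real.log n + ε * Real.log ε - ε ≤ -∑ i ∈ S, q i * Real.log (q i) := by
  have hnpos : 0 < n := lt_of_lt_of_le one_pos hn1
  have hinv : (0:ℝ) < 1 / n := by positivity
  have hq1' : ∀ i ∈ S, q i ≤ 1 := by
    intro i hi
    calc q i ≤ ∑ j ∈ S, q j := Finset.single_le_sum hq0 hi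
      _ = 1 := hq1
  set e : ι → ℝ := fun i => max (q i - 1 / n) 0 with he
  have he0 : ∀ i ∈ S, 0 ≤ e i := fun i _ => le_max_right _ _
  have hε0 : 0 ≤ ε := by
    rw [hε]; exact Finset.sum_nonneg he0
  have heε : ∀ i ∈ S, e i ≤ ε := by
    intro i hi
    rw [hε]; exact Finset.single_le_sum he0 hi
  have h1n : 1 / n ≤ 1 := by rw [div_le_one hnpos]; exact hn1
  -- ε ≤ 1 - 1/n
  have hεub : ε ≤ 1 - 1 / n := by
    have hstep : ∀ i ∈ S, e i ≤ (1 - 1 / n) * q i := by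
      intro i hi
      have hqi0 := hq0 i hi
      have hdiv : (0:ℝ) ≤ (1 - q i) * (1 / n) :=
        mul_nonneg (by linarith [hq1' i hi]) (le_of_lt hinv)
      apply max_le
      · nlinarith
      · have : 0 ≤ (1 - 1 / n) * q i := mul_nonneg (by linarith) hqi0
        linarith
    calc ε ≤ ∑ i ∈ S, (1 - 1 / n) * q i := by rw [hε]; exact Finset.sum_le_sum hstep
      _ = (1 - 1 / n) * ∑ i ∈ S, q i := by rw [Finset.mul_sum]
      _ = 1 - 1 / n := by rw [hq1, mul_one]
  -- per-term bound
  have hterm : ∀ i ∈ S,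
      (q i - e i) * Real.log n - e i - e i * Real.log (1 / n + ε) ≤
        -(q i * Real.log (q i)) := by
    intro i hi
    have hqi0 := hq0 i hi
    have hei0 := he0 i hi
    have heiε := heε i hi
    have hqle : q i ≤ 1 / n + e i := by
      have := le_max_left (q i - 1 / n) 0
      simp only [he] at *; linarith
    have hm0 : 0 ≤ q i - e i := by
      simp only [he]
      rcases le_or_gt (q i - 1/n) 0 with h | h
      · rw [max_eq_right h]; linarith
      · rw [max_eq_left (le_of_lt h)]; linarith
    have hmn : q i - e i ≤ 1 / n := by
      simp only [he]
      rcases le_or_gt (q i - 1/n) 0 with h | h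
      · rw [max_eq_right h]; linarith
      · rw [max_eq_left (le_of_lt h)]; linarith
    have hden : (0:ℝ) < 1 / n + e i := by linarith
    have hden1 : (0:ℝ) < 1 + n * e i := by nlinarith
    -- step 1 : -(q log q) ≥ -(q log (1/n + e))
    have step1 : -(q i * Real.log (1 / n + e i)) ≤ -(q i * Real.log (q i)) := by
      rcases eq_or_lt_of_le hqi0 with h0 | h0
      · rw [← h0]; simp
      · have : Real.log (q i) ≤ Real.log (1 / n + e i) :=
          Real.log_le_log h0 hqle
        nlinarith
    -- step 2 : decompose the log
    have hlogsplit : Real.log (1 / n + e i) = Real.log (1 + n * e i) - Real.log n := by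
      have h1 : 1 / n + e i = (1 + n * e i) / n := by
        field_simp
      rw [h1, Real.log_div (ne_of_gt hden1) (ne_of_gt hnpos)]
    have hA : (q i - e i) * Real.log (1 + n * e i) ≤ e i := by
      have hl : Real.log (1 + n * e i) ≤ n * e i :=
        (Real.log_le_sub_one_of_pos hden1).trans (by linarith)
      have hl0 : 0 ≤ Real.log (1 + n * e i) :=
        Real.log_nonneg (by nlinarith)
      calc (q i - e i) * Real.log (1 + n * e i) ≤ (1 / n) * Real.log (1 + n * e i) :=
            mul_le_mul_of_nonneg_right hmn hl0
        _ ≤ (1 / n) * (n * e i) := mul_le_mul_of_nonneg_left hl (le_of_lt hinv)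
        _ = e i := by field_simp
    have hB : e i * Real.log (1 / n + e i) ≤ e i * Real.log (1 / n + ε) := by
      apply mul_le_mul_of_nonneg_left ?_ hei0
      exact Real.log_le_log hden (by linarith)
    -- combine
    have expand : -(q i * Real.log (1 / n + e i)) =
        (q i - e i) * Real.log n - (q i - e i) * Real.log (1 + n * e i)
          - e i * Real.log (1 / n + e i) := by
      rw [hlogsplit]; ring
    nlinarith [step1]
  -- sum up
  have hsum : ∑ i ∈ S, ((q i - e i) * Real.log n - e i - e i * Real.log (1 / n + ε)) ≤
      -∑ i ∈ S, q i * Real.log (q i) := by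
    rw [← Finset.sum_neg_distrib]
    exact Finset.sum_le_sum hterm
  have hsume : ∑ i ∈ S, e i = ε := hε.symm
  have hlhs : ∑ i ∈ S, ((q i - e i) * Real.log n - e i - e i * Real.log (1 / n + ε)) =
      (1 - ε) * Real.log n - ε - ε * Real.log (1 / n + ε) := by
    rw [Finset.sum_sub_distrib, Finset.sum_sub_distrib, ← Finset.sum_mul, ← Finset.sum_mul,
      Finset.sum_sub_distrib, hq1, hsume]
  rw [hlhs] at hsum
  -- final : ε log ε ≤ - ε log (1/n + ε)
  have hfinal : ε * Real.log ε ≤ -(ε * Real.log (1 / n + ε)) := by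
    rcases eq_or_lt_of_le hε0 with h0 | h0
    · rw [← h0]; simp
    · have hprod : ε * (1 / n + ε) ≤ 1 := by nlinarith
      have hmul : Real.log ε + Real.log (1 / n + ε) = Real.log (ε * (1 / n + ε)) :=
        (Real.log_mul (ne_of_gt h0) (by linarith)).symm
      have hle : Real.log (ε * (1 / n + ε)) ≤ 0 :=
        Real.log_nonpos (by positivity) hprod
      nlinarith
  linarith




set_option maxHeartbeats 1000000 in
/-- One-sided deviation from uniform of a distribution proportional to `r`,
with multiplicative bounds `1/M ≤ r ≤ M`. -/
lemma tv_bound {ι : Type*} [DecidableEq ι] (S : Finset ι) (r M : ι → ℝ) (n R : ℝ)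
    (hn : n = S.card) (hSne : S.Nonempty)
    (hM1 : ∀ i ∈ S, 1 ≤ M i)
    (hrlb : ∀ i ∈ S, 1 / M i ≤ r i)
    (hrub : ∀ i ∈ S, r i ≤ M i)
    (hR : R = ∑ i ∈ S, r i) :
    ∑ i ∈ S, max (r i / R - 1 / n) 0 ≤ (∑ i ∈ S, (M i - 1)) / n := by
  classical
  have hMpos : ∀ i ∈ S, 0 < M i := fun i hi => lt_of_lt_of_le one_pos (hM1 i hi)
  have hrpos : ∀ i ∈ S, 0 < r i := fun i hi =>
    lt_of_lt_of_le (one_div_pos.mpr (hMpos i hi)) (hrlb i hi)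
  have hRpos : 0 < R := by
    rw [hR]; exact Finset.sum_pos hrpos hSne
  have hnpos : 0 < n := by
    rw [hn]
    exact_mod_cast Finset.card_pos.mpr hSne
  have hT0 : 0 ≤ ∑ i ∈ S, (M i - 1) :=
    Finset.sum_nonneg fun i hi => by linarith [hM1 i hi]
  -- total mass one
  have hq1 : ∑ i ∈ S, r i / R = 1 := by
    rw [← Finset.sum_div, ← hR, div_self (ne_of_gt hRpos)]
  -- switch to the deficit form
  have hswitch : ∑ i ∈ S, max (r i / R - 1 / n) 0 = ∑ i ∈ S, max (1 / n - r i / R) 0 := by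
    have key : ∀ i ∈ S, max (r i / R - 1 / n) 0 - max (1 / n - r i / R) 0
        = r i / R - 1 / n := by
      intro i _
      rcases le_total (r i / R) (1 / n) with h | h
      · rw [max_eq_right (by linarith), max_eq_left (by linarith)]; ring
      · rw [max_eq_left (by linarith), max_eq_right (by linarith)]; ring
    have hsub : ∑ i ∈ S, (max (r i / R - 1 / n) 0 - max (1 / n - r i / R) 0)
        = ∑ i ∈ S, (r i / R - 1 / n) := Finset.sum_congr rfl key
    rw [Finset.sum_sub_distrib] at hsub
    have hz : ∑ i ∈ S, (r i / R - 1 / n) = 0 := by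
      rw [Finset.sum_sub_distrib, hq1, Finset.sum_const, hn]
      have hS0 : ((S.card : ℕ) : ℝ) ≠ 0 := by rw [← hn]; exact ne_of_gt hnpos
      rw [nsmul_eq_mul, mul_one_div_cancel hS0, sub_self]
    linarith
  rw [hswitch]
  -- the deficit set
  set A : Finset ι := S.filter (fun i => r i / R < 1 / n) with hA
  have hAS : A ⊆ S := Finset.filter_subset _ _
  have hsplit : ∑ i ∈ S, max (1 / n - r i / R) 0 = ∑ i ∈ A, (1 / n - r i / R) := by
    rw [← Finset.sum_filter_add_sum_filter_not S (fun i => r i / R < 1 / n)]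
    have h2 : ∑ i ∈ S.filter (fun i => ¬ r i / R < 1 / n), max (1 / n - r i / R) 0 = 0 := by
      apply Finset.sum_eq_zero
      intro i hi
      rw [Finset.mem_filter] at hi
      rw [max_eq_right (by push_neg at hi; linarith [hi.2])]
    have h1 : ∑ i ∈ A, max (1 / n - r i / R) 0 = ∑ i ∈ A, (1 / n - r i / R) := by
      apply Finset.sum_congr rfl
      intro i hi
      rw [hA, Finset.mem_filter] at hi
      rw [max_eq_left (by linarith [hi.2])]
    rw [h2, add_zero, ← hA, h1]
  rw [hsplit]
  rcases Finset.eq_empty_or_nonempty A with hAe | hAne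
  · rw [hAe, Finset.sum_empty]; exact div_nonneg hT0 (le_of_lt hnpos)
  -- nonempty deficit set
  set B : Finset ι := S \ A with hB
  set k : ℝ := (A.card : ℝ) with hk
  set CA : ℝ := ∑ i ∈ A, 1 / M i with hCA
  set V : ℝ := ∑ i ∈ A, (1 - 1 / M i) with hV
  set TA : ℝ := ∑ i ∈ A, (M i - 1) with hTA
  set TB : ℝ := ∑ i ∈ B, (M i - 1) with hTB
  set SB : ℝ := ∑ i ∈ B, M i with hSB
  set RA : ℝ := ∑ i ∈ A, r i with hRA
  set RB : ℝ := ∑ i ∈ B, r i with hRB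
  have hBS : B ⊆ S := Finset.sdiff_subset
  have memA : ∀ i ∈ A, i ∈ S := fun i hi => hAS hi
  have memB : ∀ i ∈ B, i ∈ S := fun i hi => hBS hi
  -- basic facts
  have hCApos : 0 < CA := Finset.sum_pos (fun i hi => one_div_pos.mpr (hMpos i (memA i hi))) hAne
  have hRAlb : CA ≤ RA := Finset.sum_le_sum fun i hi => hrlb i (memA i hi)
  have hRApos : 0 < RA := lt_of_lt_of_le hCApos hRAlb
  have hRBub : RB ≤ SB := Finset.sum_le_sum fun i hi => hrub i (memB i hi)
  have hSB0 : 0 ≤ SB := Finset.sum_nonneg fun i hi => le_of_lt (hMpos i (memB i hi))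
  have hTB0 : 0 ≤ TB := Finset.sum_nonneg fun i hi => by linarith [hM1 i (memB i hi)]
  have hTA0 : 0 ≤ TA := Finset.sum_nonneg fun i hi => by linarith [hM1 i (memA i hi)]
  have hV0 : 0 ≤ V := Finset.sum_nonneg fun i hi => by
    have h := hM1 i (memA i hi)
    have : 1 / M i ≤ 1 := by rw [div_le_one (by linarith)]; exact h
    linarith
  have hVk : V ≤ k := by
    rw [hV, hk]
    calc ∑ i ∈ A, (1 - 1 / M i) ≤ ∑ i ∈ A, 1 := Finset.sum_le_sum fun i hi => by
          have h0 := one_div_pos.mpr (hMpos i (memA i hi)); linarith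
      _ = (A.card : ℝ) := by simp
  have hVTA : V ≤ TA := by
    rw [hV, hTA]
    apply Finset.sum_le_sum
    intro i hi
    have h := hM1 i (memA i hi)
    have hp := hMpos i (memA i hi)
    have key : (0:ℝ) ≤ (M i - 1)^2 / M i := by positivity
    have : (M i - 1) - (1 - 1 / M i) = (M i - 1)^2 / M i := by field_simp
    linarith
  have hCAV : CA = k - V := by
    rw [hCA, hV, hk, Finset.sum_sub_distrib]
    simp
  have hSBB : SB = ((B.card : ℝ)) + TB := by
    rw [hSB, hTB, Finset.sum_sub_distrib]
    simp
  have hkn : k ≤ n := by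
    rw [hk, hn]
    exact_mod_cast Finset.card_le_card hAS
  have hcardB : (B.card : ℝ) = n - k := by
    rw [hB, hn, hk]
    rw [Finset.card_sdiff_of_subset hAS]
    have := Finset.card_le_card hAS
    push_cast [Nat.cast_sub this]
    ring
  have hRsum : R = RA + RB := by
    rw [hR, hRA, hRB, hB, ← Finset.sum_sdiff hAS]
    ring
  have hε1 : ∑ i ∈ A, (1 / n - r i / R) = k / n - RA / R := by
    rw [Finset.sum_sub_distrib, Finset.sum_const, nsmul_eq_mul, ← Finset.sum_div, ← hRA, ← hk]
    ring
  rw [hε1]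
  have hTsum : ∑ i ∈ S, (M i - 1) = TA + TB := by
    rw [hTA, hTB, hB, ← Finset.sum_sdiff hAS]
    ring
  rw [hTsum]
  clear_value k CA V TA TB SB RA RB
  have hD : 0 < CA + SB := by linarith
  have hQA : CA / (CA + SB) ≤ RA / R := by
    have h1 : RA / (RA + SB) ≤ RA / R := by
      apply div_le_div_of_nonneg_left (le_of_lt hRApos) hRpos
      linarith
    have h2 : CA / (CA + SB) ≤ RA / (RA + SB) := by
      rw [div_le_div_iff₀ hD (by linarith)]
      nlinarith
    linarith
  have hcore : k * (CA + SB) - n * CA ≤ (TA + TB) * (CA + SB) := by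
    have hSBval : SB = (n - k) + TB := by rw [hSBB, hcardB]
    rw [hCAV, hSBval]
    nlinarith [mul_nonneg hV0 (sub_nonneg.mpr hVk), mul_nonneg hTB0 (sub_nonneg.mpr hkn),
      sq_nonneg TB, mul_nonneg (sub_nonneg.mpr hVTA) (by linarith : (0:ℝ) ≤ n - V + TB)]
  have hfin : k / n - CA / (CA + SB) ≤ (TA + TB) / n := by
    rw [div_sub_div _ _ (ne_of_gt hnpos) (ne_of_gt hD), div_le_div_iff₀ (by positivity) hnpos]
    nlinarith [mul_le_mul_of_nonneg_right hcore (le_of_lt hnpos)]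
  linarith




/-- Non-asymptotic combination of Theorems 1 and 2 of the paper: the Shannon
entropy of the posterior source-distance distribution `q κ'` under actual side
information `κ'` is lower bounded in terms of the (clipped) total variation
bound `ρ̄`. (In Lean, `Real.log 0 = 0`, so the convention `ρ̄ · log ρ̄ = 0` at
`ρ̄ = 0` holds automatically.) -/
theorem stmt_16 (ℓ₁ ℓ₂ : ℕ) (h1 : 1 ≤ ℓ₁) (h12 : ℓ₁ < ℓ₂)
    (a φ κ κ' : ℝ) (ha : 0 < a) (hφ0 : 0 ≤ φ) (hφ1 : φ ≤ 1)
    (hκ : (ℓ₂ : ℝ) < κ) (hκ' : (ℓ₂ : ℝ) < κ')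
    (φl K : ℕ → ℝ)
    (hφl : ∀ ℓ ∈ Finset.Icc ℓ₁ ℓ₂, φl ℓ ∈ Set.Icc 0 φ)
    (hK : ∀ ℓ ∈ Finset.Icc ℓ₁ ℓ₂, 0 < K ℓ)
    (g F : ℝ → ℕ → ℝ)
    (hg : ∀ (τ : ℝ) (ℓ : ℕ),
      g τ ℓ = (ℓ : ℝ) / (1 - Real.exp (-(a * (τ - (ℓ : ℝ))))) + 1 / (1 - Real.exp (-a)))
    (hF : ∀ (τ : ℝ) (ℓ : ℕ), F τ ℓ = K ℓ * Real.exp (-(a * φl ℓ * g τ ℓ)))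
    (pstar : ℕ → ℝ)
    (hps : ∀ ℓ : ℕ, pstar ℓ = (1 / F κ ℓ) / ∑ ℓ' ∈ Finset.Icc ℓ₁ ℓ₂, 1 / F κ ℓ')
    (q : ℝ → ℕ → ℝ)
    (hq : ∀ (τ : ℝ) (ℓ : ℕ),
      q τ ℓ = pstar ℓ * F τ ℓ / ∑ ℓ' ∈ Finset.Icc ℓ₁ ℓ₂, pstar ℓ' * F τ ℓ')
    (Δ : ℕ → ℝ)
    (hΔ : ∀ ℓ : ℕ, Δ ℓ = (ℓ : ℝ) *
      |1 / (1 - Real.exp (-(a * (κ' - (ℓ : ℝ))))) - 1 / (1 - Real.exp (-(a * (κ - (ℓ : ℝ)))))|)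
    (ρ : ℝ)
    (hρ : ρ = min 1 ((1 / ((ℓ₂ : ℝ) - (ℓ₁ : ℝ))) *
      ∑ ℓ ∈ Finset.Icc ℓ₁ ℓ₂, (Real.exp (a * φ * Δ ℓ) - 1))) :
    (1 - ρ) * Real.log (((ℓ₂ : ℝ) - (ℓ₁ : ℝ)) + 1) + ρ * Real.log ρ - ρ ≤
      -∑ ℓ ∈ Finset.Icc ℓ₁ ℓ₂, q κ' ℓ * Real.log (q κ' ℓ) := by
  classical
  set S := Finset.Icc ℓ₁ ℓ₂ with hS
  have hle : ℓ₁ ≤ ℓ₂ := le_of_lt h12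
  have hSne : S.Nonempty := by rw [hS]; exact Finset.nonempty_Icc.mpr hle
  have hcard : S.card = ℓ₂ + 1 - ℓ₁ := by rw [hS, Nat.card_Icc]
  set n : ℝ := (S.card : ℝ) with hn
  have hnval : n = ((ℓ₂ : ℝ) - (ℓ₁ : ℝ)) + 1 := by
    rw [hn, hcard]
    have h2 : ℓ₁ ≤ ℓ₂ + 1 := by omega
    push_cast [Nat.cast_sub h2]
    ring
  have hd1 : (1 : ℝ) ≤ (ℓ₂ : ℝ) - (ℓ₁ : ℝ) := by
    have h12' : ℓ₁ + 1 ≤ ℓ₂ := h12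
    have : ((ℓ₁ : ℝ) + 1) ≤ (ℓ₂ : ℝ) := by exact_mod_cast h12'
    linarith
  have hn2 : (2 : ℝ) ≤ n := by rw [hnval]; linarith
  have hnpos : (0 : ℝ) < n := by linarith
  -- positivity of F
  have hFpos : ∀ (τ : ℝ), ∀ ℓ ∈ S, 0 < F τ ℓ := by
    intro τ ℓ hℓ
    rw [hF]
    exact mul_pos (hK ℓ hℓ) (Real.exp_pos _)
  -- the likelihood ratio r
  set r : ℕ → ℝ := fun ℓ => F κ' ℓ / F κ ℓ with hr
  set R : ℝ := ∑ ℓ ∈ S, r ℓ with hR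
  have hrpos : ∀ ℓ ∈ S, 0 < r ℓ := fun ℓ hℓ => div_pos (hFpos κ' ℓ hℓ) (hFpos κ ℓ hℓ)
  have hRpos : 0 < R := by rw [hR]; exact Finset.sum_pos hrpos hSne
  set Z : ℝ := ∑ ℓ' ∈ S, 1 / F κ ℓ' with hZ
  have hZpos : 0 < Z := by
    rw [hZ]
    exact Finset.sum_pos (fun ℓ hℓ => one_div_pos.mpr (hFpos κ ℓ hℓ)) hSne
  have hT : ∑ ℓ' ∈ S, pstar ℓ' * F κ' ℓ' = R / Z := by
    rw [hR, Finset.sum_div]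
    apply Finset.sum_congr rfl
    intro ℓ hℓ
    rw [hps ℓ]
    show 1 / F κ ℓ / Z * F κ' ℓ = (F κ' ℓ / F κ ℓ) / Z
    ring
  have hqrep : ∀ ℓ ∈ S, q κ' ℓ = r ℓ / R := by
    intro ℓ hℓ
    have h1 : F κ ℓ ≠ 0 := ne_of_gt (hFpos κ ℓ hℓ)
    have h2 : Z ≠ 0 := ne_of_gt hZpos
    have h3 : R ≠ 0 := ne_of_gt hRpos
    rw [hq, hT, hps]
    show 1 / F κ ℓ / Z * F κ' ℓ / (R / Z) = (F κ' ℓ / F κ ℓ) / R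
    field_simp
  -- deviation bounds on r
  have hΔ0 : ∀ ℓ : ℕ, 0 ≤ Δ ℓ := by
    intro ℓ
    rw [hΔ]
    positivity
  set M : ℕ → ℝ := fun ℓ => Real.exp (a * φ * Δ ℓ) with hM
  have hM1 : ∀ ℓ ∈ S, 1 ≤ M ℓ := by
    intro ℓ hℓ
    have : 0 ≤ a * φ * Δ ℓ := mul_nonneg (mul_nonneg (le_of_lt ha) hφ0) (hΔ0 ℓ)
    exact Real.one_le_exp this
  have hrbound : ∀ ℓ ∈ S, 1 / M ℓ ≤ r ℓ ∧ r ℓ ≤ M ℓ := by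
    intro ℓ hℓ
    obtain ⟨hφl0, hφlφ⟩ := Set.mem_Icc.mp (hφl ℓ hℓ)
    have hKne : K ℓ ≠ 0 := ne_of_gt (hK ℓ hℓ)
    have hrexp : r ℓ = Real.exp (a * φl ℓ * (g κ ℓ - g κ' ℓ)) := by
      show F κ' ℓ / F κ ℓ = _
      rw [hF, hF, mul_div_mul_left _ _ hKne, ← Real.exp_sub]
      congr 1
      ring
    have hgdiff : |g κ ℓ - g κ' ℓ| = Δ ℓ := by
      rw [hg, hg, hΔ]
      rw [show ((ℓ : ℝ) / (1 - Real.exp (-(a * (κ - (ℓ : ℝ))))) + 1 / (1 - Real.exp (-a)))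
          - ((ℓ : ℝ) / (1 - Real.exp (-(a * (κ' - (ℓ : ℝ))))) + 1 / (1 - Real.exp (-a)))
          = (ℓ : ℝ) * (1 / (1 - Real.exp (-(a * (κ - (ℓ : ℝ)))))
            - 1 / (1 - Real.exp (-(a * (κ' - (ℓ : ℝ)))))) from by ring]
      rw [abs_mul, Nat.abs_cast, abs_sub_comm]
    have hexp : |a * φl ℓ * (g κ ℓ - g κ' ℓ)| ≤ a * φ * Δ ℓ := by
      rw [abs_mul, abs_of_nonneg (mul_nonneg (le_of_lt ha) hφl0), hgdiff]
      apply mul_le_mul_of_nonneg_right ?_ (hΔ0 ℓ)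
      exact mul_le_mul_of_nonneg_left hφlφ (le_of_lt ha)
    obtain ⟨hlo, hhi⟩ := abs_le.mp hexp
    constructor
    · have : 1 / M ℓ = Real.exp (-(a * φ * Δ ℓ)) := by
        show 1 / Real.exp (a * φ * Δ ℓ) = _
        rw [Real.exp_neg, one_div]
      rw [this, hrexp]
      exact Real.exp_le_exp.mpr (by linarith)
    · rw [hrexp]
      exact Real.exp_le_exp.mpr (by linarith)
  -- apply the TV bound
  have htv : ∑ ℓ ∈ S, max (r ℓ / R - 1 / n) 0 ≤ (∑ ℓ ∈ S, (M ℓ - 1)) / n :=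
    tv_bound S r M n R hn hSne hM1 (fun i hi => (hrbound i hi).1)
      (fun i hi => (hrbound i hi).2) hR
  -- the deviation ε
  set ε : ℝ := ∑ ℓ ∈ S, max (q κ' ℓ - 1 / n) 0 with hε
  have hεeq : ε = ∑ ℓ ∈ S, max (r ℓ / R - 1 / n) 0 := by
    rw [hε]
    exact Finset.sum_congr rfl fun ℓ hℓ => by rw [hqrep ℓ hℓ]
  have hq0 : ∀ ℓ ∈ S, 0 ≤ q κ' ℓ := by
    intro ℓ hℓ
    rw [hqrep ℓ hℓ]
    exact le_of_lt (div_pos (hrpos ℓ hℓ) hRpos)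
  have hq1 : ∑ ℓ ∈ S, q κ' ℓ = 1 := by
    rw [Finset.sum_congr rfl fun ℓ hℓ => hqrep ℓ hℓ, ← Finset.sum_div, ← hR,
      div_self (ne_of_gt hRpos)]
  -- ε ≤ ρ
  have hSig0 : 0 ≤ ∑ ℓ ∈ S, (M ℓ - 1) :=
    Finset.sum_nonneg fun ℓ hℓ => by linarith [hM1 ℓ hℓ]
  have hε0 : 0 ≤ ε := by
    rw [hε]
    exact Finset.sum_nonneg fun ℓ _ => le_max_right _ _
  have hεle1 : ε ≤ 1 := by
    have : ∀ ℓ ∈ S, max (q κ' ℓ - 1 / n) 0 ≤ q κ' ℓ := by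
      intro ℓ hℓ
      apply max_le ?_ (hq0 ℓ hℓ)
      have : (0:ℝ) < 1 / n := by positivity
      linarith
    calc ε ≤ ∑ ℓ ∈ S, q κ' ℓ := by rw [hε]; exact Finset.sum_le_sum this
      _ = 1 := hq1
  have hdpos : (0:ℝ) < (ℓ₂ : ℝ) - (ℓ₁ : ℝ) := by linarith
  have hεle2 : ε ≤ (1 / ((ℓ₂ : ℝ) - (ℓ₁ : ℝ))) * ∑ ℓ ∈ S, (Real.exp (a * φ * Δ ℓ) - 1) := by
    have hMrw : ∑ ℓ ∈ S, (Real.exp (a * φ * Δ ℓ) - 1) = ∑ ℓ ∈ S, (M ℓ - 1) := rfl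
    rw [hMrw]
    have h2 : (∑ ℓ ∈ S, (M ℓ - 1)) / n ≤ (∑ ℓ ∈ S, (M ℓ - 1)) / ((ℓ₂ : ℝ) - (ℓ₁ : ℝ)) := by
      apply div_le_div_of_nonneg_left hSig0 hdpos
      linarith [hnval]
    calc ε ≤ (∑ ℓ ∈ S, (M ℓ - 1)) / n := by rw [hεeq]; exact htv
      _ ≤ (∑ ℓ ∈ S, (M ℓ - 1)) / ((ℓ₂ : ℝ) - (ℓ₁ : ℝ)) := h2
      _ = (1 / ((ℓ₂ : ℝ) - (ℓ₁ : ℝ))) * ∑ ℓ ∈ S, (M ℓ - 1) := by ring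
  have hερ : ε ≤ ρ := by
    rw [hρ]
    exact le_min hεle1 hεle2
  have hρ1 : ρ ≤ 1 := by rw [hρ]; exact min_le_left _ _
  -- conclude
  have hent := entropy_lb S (q κ') n ε hn (by linarith) hq0 hq1 hε
  have hpsi := psi_mono n ε ρ (by linarith) hε0 hερ hρ1
  rw [show ((ℓ₂ : ℝ) - (ℓ₁ : ℝ)) + 1 = n from hnval.symm]
  linarith
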